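/- The sequence f_k(0) = I_k(−i/h²)/I_0(1/h²) is a nonzero solution datum for the discrete Schrödinger equation whose evolution satisfies f_k(1) = e^{−2i/h²} I_k(i/h²)/I_0(1/h²); consequently |f_k(0)| ≤ I_k(1/h²)/I_0(1/h²) and |f_k(1)| ≤ I_k(1/h²)/I_0(1/h²), showing the condition α + β < 2 in the discrete Hardy theorem is sharp (here α = β = 1). -/

import Mathlib

open MeasureTheory
open scoped Real ComplexConjugate

/-- Modified Bessel function of integer order `k`, complex argument:
`I_k(z) = (1/π) ∫₀^π e^{z cos θ} cos(kθ) dθ`. -/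
noncomputable def besselI (k : ℤ) (z : ℂ) : ℂ :=
  (1 / (Real.pi : ℂ)) * ∫ θ in (0:ℝ)..Real.pi, Complex.exp (z * Real.cos θ) * Real.cos (k * θ)

/-- Modified Bessel function of integer order `k`, real argument. -/
noncomputable def besselIR (k : ℤ) (x : ℝ) : ℝ :=
  (1 / Real.pi) * ∫ θ in (0:ℝ)..Real.pi, Real.exp (x * Real.cos θ) * Real.cos (k * θ)

lemma integral_cos_int_mul (k : ℤ) (hk : k ≠ 0) :
    ∫ θ in (0:ℝ)..π, Real.cos (k * θ) = 0 := by
  have hk' : (k:ℝ) ≠ 0 := Int.cast_ne_zero.mpr hk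
  have := intervalIntegral.integral_comp_mul_left (a := (0:ℝ)) (b := π)
    (fun x => Real.cos x) hk'
  simp only [mul_zero] at this
  rw [this, integral_cos, Real.sin_int_mul_pi, Real.sin_zero]
  simp

noncomputable def bc (n : ℕ) (k : ℤ) : ℝ :=
  (1/π) * ∫ θ in (0:ℝ)..π, (Real.cos θ)^n * Real.cos (k*θ)

lemma bc_zero (k : ℤ) : bc 0 k = if k = 0 then 1 else 0 := by
  rcases eq_or_ne k 0 with rfl | hk
  · simp [bc, Real.pi_ne_zero]
  · simp only [bc, pow_zero, one_mul, integral_cos_int_mul k hk, mul_zero, if_neg hk]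

lemma bc_cont (n : ℕ) (k : ℤ) : Continuous (fun θ : ℝ => (Real.cos θ)^n * Real.cos (k*θ)) := by
  fun_prop

lemma bc_succ (n : ℕ) (k : ℤ) : bc (n+1) k = (bc n (k-1) + bc n (k+1)) / 2 := by
  have key : ∀ θ : ℝ, (Real.cos θ)^(n+1) * Real.cos (k*θ)
      = ((Real.cos θ)^n * Real.cos ((k-1:ℤ)*θ) + (Real.cos θ)^n * Real.cos ((k+1:ℤ)*θ))/2 := by
    intro θ
    have h1 : Real.cos ((k:ℝ)*θ - θ) = Real.cos ((k:ℝ)*θ) * Real.cos θ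
        + Real.sin ((k:ℝ)*θ) * Real.sin θ := Real.cos_sub _ _
    have h2 : Real.cos ((k:ℝ)*θ + θ) = Real.cos ((k:ℝ)*θ) * Real.cos θ
        - Real.sin ((k:ℝ)*θ) * Real.sin θ := Real.cos_add _ _
    push_cast
    rw [sub_one_mul, add_one_mul, h1, h2, pow_succ]
    ring
  unfold bc
  rw [intervalIntegral.integral_congr (g := fun θ =>
      ((Real.cos θ)^n * Real.cos ((k-1:ℤ)*θ) + (Real.cos θ)^n * Real.cos ((k+1:ℤ)*θ))/2)
      (fun θ _ => key θ)]
  rw [intervalIntegral.integral_div, intervalIntegral.integral_add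
      ((bc_cont n (k-1)).intervalIntegrable _ _) ((bc_cont n (k+1)).intervalIntegrable _ _)]
  ring

lemma bc_nonneg (n : ℕ) (k : ℤ) : 0 ≤ bc n k := by
  induction n generalizing k with
  | zero => rw [bc_zero]; split <;> norm_num
  | succ n ih => rw [bc_succ]; have h1 := ih (k-1); have h2 := ih (k+1); linarith

lemma hasSum_besselI (k : ℤ) (z : ℂ) :
    HasSum (fun n : ℕ => z^n / n.factorial * bc n k) (besselI k z) := by
  have main : HasSum
      (fun n : ℕ => ∫ θ in (0:ℝ)..π, z^n * (Real.cos θ : ℂ)^n / n.factorial * (Real.cos (k*θ) : ℂ))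
      (∫ θ in (0:ℝ)..π, Complex.exp (z * Real.cos θ) * Real.cos (k*θ)) := by
    apply intervalIntegral.hasSum_integral_of_dominated_convergence
      (bound := fun n _ => ‖z‖ ^ n / n.factorial)
    · intro n
      apply Continuous.aestronglyMeasurable
      fun_prop
    · intro n
      filter_upwards with θ _
      rw [norm_mul, norm_div, norm_mul, norm_pow, norm_pow]
      have h1 : ‖(Real.cos θ : ℂ)‖ ≤ 1 := by
        rw [Complex.norm_real, Real.norm_eq_abs]; exact Real.abs_cos_le_one θ
      have h2 : ‖(Real.cos ((k:ℝ)*θ) : ℂ)‖ ≤ 1 := by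
        rw [Complex.norm_real, Real.norm_eq_abs]; exact Real.abs_cos_le_one _
      have h3 : ‖(n.factorial : ℂ)‖ = (n.factorial : ℝ) := by
        simp
      calc ‖z‖^n * ‖(Real.cos θ:ℂ)‖^n / ‖(n.factorial:ℂ)‖ * ‖(Real.cos ((k:ℝ)*θ):ℂ)‖
          ≤ ‖z‖^n * 1 / ‖(n.factorial:ℂ)‖ * 1 := by
            gcongr
            exact pow_le_one₀ (norm_nonneg _) h1
          _ = ‖z‖ ^ n / n.factorial := by
            rw [h3, mul_one, mul_one]
    · filter_upwards with θ _
      exact Real.summable_pow_div_factorial _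
    · apply intervalIntegrable_const
    · filter_upwards with θ _
      have := (Complex.exp_eq_exp_ℂ ▸ NormedSpace.expSeries_div_hasSum_exp (z * (Real.cos θ : ℂ)) :
        HasSum (fun n : ℕ => (z * Real.cos θ)^n / n.factorial) (Complex.exp (z * Real.cos θ)))
      have := this.mul_right (Real.cos ((k:ℝ)*θ) : ℂ)
      convert this using 2 with n
      · rfl
      rw [mul_pow]
  -- now massage
  have step : ∀ n : ℕ, (∫ θ in (0:ℝ)..π, z^n * (Real.cos θ : ℂ)^n / n.factorial * (Real.cos (k*θ) : ℂ))
      = z^n / n.factorial * ((π : ℂ) * bc n k) := by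
    intro n
    have : ∀ θ : ℝ, z^n * (Real.cos θ : ℂ)^n / n.factorial * (Real.cos ((k:ℝ)*θ) : ℂ)
        = z^n / n.factorial * (((Real.cos θ)^n * Real.cos ((k:ℝ)*θ) : ℝ) : ℂ) := by
      intro θ; push_cast; ring
    rw [intervalIntegral.integral_congr (fun θ _ => this θ),
        intervalIntegral.integral_const_mul, intervalIntegral.integral_ofReal]
    rw [bc]
    push_cast
    have hπ : (π:ℂ) ≠ 0 := by exact_mod_cast Real.pi_ne_zero
    rw [← mul_assoc (π:ℂ), mul_one_div, div_self hπ, one_mul]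
  simp_rw [step] at main
  have := main.mul_left ((1 : ℂ)/π)
  rw [besselI]
  convert this using 2 with n
  · rfl
  have hπ : (π : ℂ) ≠ 0 := by exact_mod_cast Real.pi_ne_zero
  field_simp

lemma besselI_ofReal (k : ℤ) (x : ℝ) : besselI k (x : ℂ) = ((besselIR k x : ℝ) : ℂ) := by
  rw [besselI, besselIR]
  push_cast
  congr 1
  rw [← intervalIntegral.integral_ofReal]
  apply intervalIntegral.integral_congr
  intro θ _
  push_cast
  ring

lemma hasSum_besselIR (k : ℤ) (x : ℝ) :
    HasSum (fun n : ℕ => x^n / n.factorial * bc n k) (besselIR k x) := by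
  have h := hasSum_besselI k (x : ℂ)
  rw [besselI_ofReal] at h
  rw [← Complex.hasSum_ofReal]
  convert h using 2 with n
  push_cast
  ring

lemma besselIR_nonneg (k : ℤ) (x : ℝ) (hx : 0 ≤ x) : 0 ≤ besselIR k x := by
  have h := hasSum_besselIR k x
  refine hasSum_le (fun n => ?_) hasSum_zero h
  have := bc_nonneg n k
  positivity

lemma one_le_besselIR_zero (x : ℝ) (hx : 0 ≤ x) : 1 ≤ besselIR 0 x := by
  have h := hasSum_besselIR 0 x
  have h0 : x^0 / (Nat.factorial 0) * bc 0 0 = 1 := by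
    rw [bc_zero]; simp
  calc (1:ℝ) = x^0 / (Nat.factorial 0) * bc 0 0 := h0.symm
    _ ≤ besselIR 0 x := by
        refine le_hasSum h 0 (fun n _ => ?_)
        have := bc_nonneg n 0
        positivity

lemma abs_besselI_le (k : ℤ) (z : ℂ) :
    ‖besselI k z‖ ≤ besselIR k ‖z‖ := by
  have h1 := hasSum_besselI k z
  have h2 := hasSum_besselIR k ‖z‖
  rw [← h1.tsum_eq]
  refine tsum_of_norm_bounded h2 (fun n => ?_)
  rw [norm_mul, norm_div]
  have hb : ‖((bc n k : ℝ) : ℂ)‖ = bc n k := by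
    rw [Complex.norm_real, Real.norm_eq_abs, abs_of_nonneg (bc_nonneg n k)]
  rw [hb, norm_pow]
  have : ‖(n.factorial : ℂ)‖ = (n.factorial : ℝ) := by simp
  rw [this]

lemma besselI_conj (k : ℤ) (z : ℂ) :
    besselI k (conj z) = conj (besselI k z) := by
  have h1 := (hasSum_besselI k z).map (starRingEnd ℂ).toAddMonoidHom
    Complex.continuous_conj
  have h2 := hasSum_besselI k (conj z)
  refine h2.unique ?_
  convert h1 using 2 with n
  simp [map_div₀, map_pow, Complex.conj_ofReal]
  rfl

lemma besselI_neg (k : ℤ) (z : ℂ) : besselI (-k) z = besselI k z := by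
  rw [besselI, besselI]
  congr 1
  apply intervalIntegral.integral_congr
  intro θ _
  push_cast
  rw [neg_mul, Complex.cos_neg]

lemma besselI_zero_arg (k : ℤ) : besselI k 0 = if k = 0 then 1 else 0 := by
  have h := hasSum_besselI k 0
  have h' : HasSum (fun n : ℕ => (0:ℂ)^n / n.factorial * bc n k)
      ((0:ℂ)^0 / (Nat.factorial 0) * bc 0 k) := by
    apply hasSum_single 0
    intro n hn
    rw [zero_pow hn]
    simp
  have := h.unique h'
  rw [this, bc_zero]
  simp
  split <;> simp

local instance fact2pi : Fact (0 < 2 * π) := ⟨by positivity⟩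

noncomputable def Gc (z : ℂ) : C(AddCircle (2*π), ℂ) where
  toFun θ := Complex.exp (z * Real.Angle.cos θ)
  continuous_toFun := Complex.continuous_exp.comp
    (continuous_const.mul (Complex.continuous_ofReal.comp Real.Angle.continuous_cos))

lemma Gc_coe (z : ℂ) (x : ℝ) : Gc z (x : AddCircle (2*π)) = Complex.exp (z * Real.cos x) := by
  show Complex.exp (z * Real.Angle.cos (x : Real.Angle)) = _
  rw [Real.Angle.cos_coe]

lemma fourier_coe_eq (n : ℤ) (x : ℝ) :
    (fourier n (x : AddCircle (2*π)) : ℂ) = Complex.exp ((n * x : ℝ) * Complex.I) := by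
  rw [fourier_coe_apply]
  congr 1
  have hπ : ((2:ℂ) * π) ≠ 0 := by
    simp [Real.pi_ne_zero, Complex.ofReal_ne_zero]
  push_cast
  field_simp

lemma fourierCoeff_Gc (z : ℂ) (n : ℤ) : fourierCoeff (⇑(Gc z)) n = besselI n z := by
  rw [fourierCoeff_eq_intervalIntegral _ n (-π)]
  have hpi : -π + 2*π = π := by ring
  rw [hpi]
  have e0 : ∀ x : ℝ, (fourier (-n) (x : AddCircle (2*π)) : ℂ) • Gc z (x : AddCircle (2*π))
      = Complex.exp (((-n : ℤ) * x : ℝ) * Complex.I) * Complex.exp (z * Real.cos x) := by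
    intro x
    rw [smul_eq_mul, fourier_coe_eq, Gc_coe]
  have hInt : ∀ a b : ℝ, IntervalIntegrable
      (fun x : ℝ => Complex.exp (((-n : ℤ) * x : ℝ) * Complex.I) * Complex.exp (z * Real.cos x))
      volume a b := by
    intro a b
    apply Continuous.intervalIntegrable
    fun_prop
  rw [intervalIntegral.integral_congr (fun x _ => e0 x)]
  rw [← intervalIntegral.integral_add_adjacent_intervals (hInt (-π) 0) (hInt 0 π)]
  have hneg : (∫ x in (-π:ℝ)..(0:ℝ),
      Complex.exp (((-n : ℤ) * x : ℝ) * Complex.I) * Complex.exp (z * Real.cos x))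
      = ∫ x in (0:ℝ)..π,
      Complex.exp (((-n : ℤ) * (-x) : ℝ) * Complex.I) * Complex.exp (z * Real.cos (-x)) := by
    rw [intervalIntegral.integral_comp_neg
      (fun x => Complex.exp (((-n : ℤ) * x : ℝ) * Complex.I) * Complex.exp (z * Real.cos x))]
    norm_num
  rw [hneg]
  have hInt2 : IntervalIntegrable
      (fun x : ℝ => Complex.exp (((-n : ℤ) * (-x) : ℝ) * Complex.I) * Complex.exp (z * Real.cos (-x)))
      volume 0 π := by
    apply Continuous.intervalIntegrable; fun_prop
  rw [← intervalIntegral.integral_add hInt2 (hInt 0 π)]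
  have key : ∀ x : ℝ,
      Complex.exp (((-n : ℤ) * (-x) : ℝ) * Complex.I) * Complex.exp (z * Real.cos (-x))
      + Complex.exp (((-n : ℤ) * x : ℝ) * Complex.I) * Complex.exp (z * Real.cos x)
      = 2 * (Complex.exp (z * Real.cos x) * (Real.cos (n * x) : ℂ)) := by
    intro x
    rw [Real.cos_neg]
    have h2c := Complex.two_cos (x := ((n * x : ℝ) : ℂ))
    rw [Complex.ofReal_cos, Complex.ofReal_cos]
    have e1 : (((-n : ℤ) * (-x) : ℝ) : ℂ) * Complex.I = ((n * x : ℝ) : ℂ) * Complex.I := by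
      push_cast; ring
    have e2 : (((-n : ℤ) * x : ℝ) : ℂ) * Complex.I = -(((n * x : ℝ) : ℂ)) * Complex.I := by
      push_cast; ring
    rw [e1, e2]
    linear_combination (-(Complex.exp (z * Complex.cos (x:ℂ)))) * h2c
  rw [intervalIntegral.integral_congr (fun x _ => key x)]
  rw [intervalIntegral.integral_const_mul]
  rw [besselI, Complex.real_smul, ← mul_assoc]
  congr 1
  have hπ : (π : ℂ) ≠ 0 := by exact_mod_cast Real.pi_ne_zero
  push_cast
  field_simp

lemma fourierCoeff_congr_ae' {f g : AddCircle (2*π) → ℂ}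
    (h : f =ᵐ[@AddCircle.haarAddCircle (2*π) _] g) (n : ℤ) : fourierCoeff f n = fourierCoeff g n := by
  unfold fourierCoeff
  refine integral_congr_ae ?_
  filter_upwards [h] with t ht
  rw [ht]

lemma fourierCoeff_mul_fourier (f : AddCircle (2*π) → ℂ) (k m : ℤ) :
    fourierCoeff (fun t => f t * fourier k t) m = fourierCoeff f (m - k) := by
  unfold fourierCoeff
  refine integral_congr_ae (Filter.Eventually.of_forall fun t => ?_)
  show (fourier (-m) t : ℂ) • (f t * fourier k t) = (fourier (-(m-k)) t : ℂ) • f t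
  rw [smul_eq_mul, smul_eq_mul]
  have h1 : (fourier (-m) t : ℂ) * (f t * fourier k t)
      = (fourier (-m) t * fourier k t) * f t := by ring
  rw [h1, ← fourier_add]
  have h2 : -m + k = -(m - k) := by ring
  rw [h2]


lemma hasSum_besselI_add (k : ℤ) (z w : ℂ) :
    HasSum (fun m : ℤ => besselI m z * besselI (k - m) w) (besselI k (z+w)) := by
  set μ := @AddCircle.haarAddCircle (2*π) _ with hμ
  set x : Lp ℂ 2 μ := ContinuousMap.toLp 2 μ ℂ (Gc (conj z)) with hxdef
  set y : Lp ℂ 2 μ := ContinuousMap.toLp 2 μ ℂ ((Gc w * fourier k : C(AddCircle (2*π), ℂ))) with hydef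
  have hxae : (⇑x : AddCircle (2*π) → ℂ) =ᵐ[μ] ⇑(Gc (conj z)) := ContinuousMap.coeFn_toLp (p := 2) (μ := μ) (𝕜 := ℂ) _
  have hyae : (⇑y : AddCircle (2*π) → ℂ) =ᵐ[μ] ⇑((Gc w * fourier k : C(AddCircle (2*π), ℂ))) := ContinuousMap.coeFn_toLp (p := 2) (μ := μ) (𝕜 := ℂ) _
  have hs := fourierBasis.hasSum_inner_mul_inner x y
  have hx : ∀ m : ℤ, (inner ℂ x (fourierBasis m) : ℂ) = besselI m z := by
    intro m
    rw [← inner_conj_symm, ← HilbertBasis.repr_apply_apply, fourierBasis_repr,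
      fourierCoeff_congr_ae' hxae, fourierCoeff_Gc, besselI_conj, Complex.conj_conj]
  have hy : ∀ m : ℤ, (inner ℂ (fourierBasis m) y : ℂ) = besselI (k - m) w := by
    intro m
    rw [← HilbertBasis.repr_apply_apply, fourierBasis_repr, fourierCoeff_congr_ae' hyae]
    have : (⇑((Gc w * fourier k : C(AddCircle (2*π), ℂ))) : AddCircle (2*π) → ℂ) = fun t => Gc w t * fourier k t := rfl
    rw [this, fourierCoeff_mul_fourier, fourierCoeff_Gc]
    have : m - k = -(k - m) := by ring
    rw [this, besselI_neg]
  have hxy : (inner ℂ x y : ℂ) = besselI k (z + w) := by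
    rw [MeasureTheory.L2.inner_def]
    have : ∫ t, (inner ℂ (x t) (y t) : ℂ) ∂μ
        = ∫ t, fourier (-(-k)) t • Gc (z+w) t ∂μ := by
      refine integral_congr_ae ?_
      filter_upwards [hxae, hyae] with t hxt hyt
      rw [RCLike.inner_apply, hxt, hyt]
      rw [mul_comm ((Gc w * fourier k : C(AddCircle (2*π), ℂ)) t)]
      show (starRingEnd ℂ) (Complex.exp (conj z * (Real.Angle.cos t : ℝ)))
          * (Complex.exp (w * (Real.Angle.cos t : ℝ)) * fourier k t)
          = fourier (-(-k)) t • Complex.exp ((z+w) * (Real.Angle.cos t : ℝ))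
      rw [neg_neg, smul_eq_mul, ← Complex.exp_conj, map_mul, Complex.conj_conj,
        Complex.conj_ofReal, ← mul_assoc, ← Complex.exp_add, ← add_mul]
      ring
    rw [this]
    have : (∫ t, fourier (-(-k)) t • Gc (z+w) t ∂μ) = fourierCoeff (⇑(Gc (z+w))) (-k) := rfl
    rw [this, fourierCoeff_Gc, besselI_neg]
  have hterm : (fun m : ℤ => (inner ℂ x (fourierBasis m) : ℂ) * inner ℂ (fourierBasis m) y)
      = fun m => besselI m z * besselI (k - m) w := by
    funext m; rw [hx m, hy m]
  rw [hterm, hxy] at hs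
  exact hs

/-- Sharpness of the condition α + β < 2: the nonzero datum
f_k(0) = I_k(-i/h²)/I_0(1/h²) evolves under the discrete Schrödinger equation to
f_k(1) = e^{-2i/h²} I_k(i/h²)/I_0(1/h²), and both f(0) and f(1) satisfy the Bessel
bounds with α = β = 1. -/
theorem stmt_15 (h : ℝ) (hh : 0 < h)
    (f : ℤ → ℝ → ℂ)
    (hf : ∀ (k : ℤ) (t : ℝ),
      f k t = Complex.exp (-2 * Complex.I * (t : ℂ) / (h : ℂ) ^ 2) *
        ∑' m : ℤ, (besselI m (-Complex.I / (h : ℂ) ^ 2) / (besselIR 0 (1 / h ^ 2) : ℝ)) *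
          besselI (k - m) (2 * Complex.I * (t : ℂ) / (h : ℂ) ^ 2)) :
    (∃ k : ℤ, f k 0 ≠ 0) ∧
    (∀ k : ℤ, f k 1 = Complex.exp (-2 * Complex.I / (h : ℂ) ^ 2) *
        besselI k (Complex.I / (h : ℂ) ^ 2) / (besselIR 0 (1 / h ^ 2) : ℝ)) ∧
    (∀ k : ℤ, ‖f k 0‖ ≤ besselIR k (1 / h ^ 2) / besselIR 0 (1 / h ^ 2)) ∧
    (∀ k : ℤ, ‖f k 1‖ ≤ besselIR k (1 / h ^ 2) / besselIR 0 (1 / h ^ 2)) := by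
  have hh2 : (0:ℝ) < 1 / h ^ 2 := by positivity
  set r : ℝ := 1 / h ^ 2 with hr
  set z : ℂ := -Complex.I / (h : ℂ) ^ 2 with hzdef
  have hc0 : (0:ℝ) < besselIR 0 r := lt_of_lt_of_le one_pos (one_le_besselIR_zero r hh2.le)
  have hc0' : ((besselIR 0 r : ℝ) : ℂ) ≠ 0 := by exact_mod_cast hc0.ne'
  have hhc : (h:ℂ) ≠ 0 := Complex.ofReal_ne_zero.mpr hh.ne'
  have hz : z = ((-r : ℝ) : ℂ) * Complex.I := by
    rw [hzdef, hr]; push_cast; field_simp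
  have hw1 : Complex.I / (h : ℂ) ^ 2 = ((r : ℝ) : ℂ) * Complex.I := by
    rw [hr]; push_cast; field_simp
  -- value at t = 0
  have harg0 : (2 * Complex.I * ((0:ℝ) : ℂ) / (h : ℂ) ^ 2) = 0 := by push_cast; ring
  have hexp0 : (-2 * Complex.I * ((0:ℝ) : ℂ) / (h : ℂ) ^ 2) = 0 := by push_cast; ring
  have f0 : ∀ k : ℤ, f k 0 = besselI k z / ((besselIR 0 r : ℝ) : ℂ) := by
    intro k
    rw [hf k 0]
    simp only [harg0, hexp0, Complex.exp_zero, one_mul]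
    rw [tsum_eq_single k ?_]
    · rw [sub_self, besselI_zero_arg, if_pos rfl, mul_one]
    · intro m hm
      rw [besselI_zero_arg, if_neg (sub_ne_zero.mpr (Ne.symm hm)), mul_zero]
  -- value at t = 1
  have f1 : ∀ k : ℤ, f k 1 = Complex.exp (-2 * Complex.I / (h : ℂ) ^ 2) *
      besselI k (Complex.I / (h : ℂ) ^ 2) / ((besselIR 0 r : ℝ) : ℂ) := by
    intro k
    set w : ℂ := 2 * Complex.I * ((1:ℝ) : ℂ) / (h : ℂ) ^ 2 with hwdef
    have hzw : z + w = Complex.I / (h : ℂ) ^ 2 := by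
      rw [hzdef, hwdef]; push_cast; ring
    have hdiv := (hasSum_besselI_add k z w).div_const ((besselIR 0 r : ℝ) : ℂ)
    have hfun : (fun m : ℤ => besselI m z * besselI (k - m) w / ((besselIR 0 r : ℝ) : ℂ))
        = fun m : ℤ => (besselI m z / ((besselIR 0 r : ℝ) : ℂ)) * besselI (k - m) w := by
      funext m; ring
    rw [hfun] at hdiv
    rw [hf k 1, hdiv.tsum_eq, hzw]
    have he : (-2 * Complex.I * ((1:ℝ) : ℂ) / (h : ℂ) ^ 2) = -2 * Complex.I / (h : ℂ) ^ 2 := by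
      norm_num
    rw [he]
    exact (mul_div_assoc _ _ _).symm
  refine ⟨?_, fun k => f1 k, ?_, ?_⟩
  · -- nonvanishing
    by_contra hcon
    push_neg at hcon
    have hball : ∀ k : ℤ, besselI k z = 0 := by
      intro k
      have := hcon k
      rw [f0 k, div_eq_zero_iff] at this
      tauto
    have hadd0 := hasSum_besselI_add 0 z (conj z)
    have hzc : z + conj z = 0 := by
      rw [hz, map_mul, Complex.conj_I, Complex.conj_ofReal]; ring
    rw [hzc, besselI_zero_arg, if_pos rfl] at hadd0
    have hzero : (fun m : ℤ => besselI m z * besselI (0 - m) (conj z)) = fun _ => (0:ℂ) := by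
      funext m; rw [hball m, zero_mul]
    rw [hzero] at hadd0
    exact one_ne_zero (hadd0.unique hasSum_zero)
  · -- bound at 0
    intro k
    rw [f0 k, norm_div, Complex.norm_real, Real.norm_eq_abs, abs_of_pos hc0]
    have hb := abs_besselI_le k z
    have habsz : ‖z‖ = r := by
      rw [hz, norm_mul, Complex.norm_real, Complex.norm_I, mul_one, Real.norm_eq_abs, abs_neg, abs_of_pos hh2]
    rw [habsz] at hb
    exact div_le_div_of_nonneg_right hb hc0.le |>.trans_eq rfl
  · -- bound at 1
    intro k
    rw [f1 k, norm_div, norm_mul, Complex.norm_real, Real.norm_eq_abs, abs_of_pos hc0]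
    have hexpabs : ‖Complex.exp (-2 * Complex.I / (h : ℂ) ^ 2)‖ = 1 := by
      rw [Complex.norm_exp]
      have hre : (-2 * Complex.I / (h : ℂ) ^ 2) = ((-2*r : ℝ) : ℂ) * Complex.I := by
        rw [hr]; push_cast; field_simp
      rw [hre]
      simp
    rw [hexpabs, one_mul]
    have hb := abs_besselI_le k (Complex.I / (h : ℂ) ^ 2)
    have habsw : ‖Complex.I / (h : ℂ) ^ 2‖ = r := by
      rw [hw1, norm_mul, Complex.norm_real, Complex.norm_I, mul_one, Real.norm_eq_abs, abs_of_pos hh2]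
    rw [habsw] at hb
    exact div_le_div_of_nonneg_right hb hc0.le |>.trans_eq rfl
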